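/- Let q > 0, c > 0, and let n ≥ 2 be an even integer. Define g(λ) = λ − c√λ · cot(q√λ/2) on J_n = ((π(n−1))² q^{−2}, (πn)² q^{−2}). Then g is continuous and strictly increasing on J_n, g(λ) → (π(n−1))² q^{−2} as λ tends to the left endpoint of J_n, and g(λ) → +∞ as λ tends to the right endpoint. Consequently, for every μ > (π(n−1))² q^{−2} there exists a unique λ ∈ J_n with g(λ) = μ. -/

import Mathlib

open Set Filter Topology Real

private lemma sin_ne_zero_aux (m : ℕ) (hm : 1 ≤ m) {t : ℝ}
    (h1 : (m : ℝ) * π - π / 2 < t) (h2 : t < (m : ℝ) * π) : Real.sin t ≠ 0 := by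
  have hπ := Real.pi_pos
  intro hs
  rcases Real.sin_eq_zero_iff.mp hs with ⟨j, hj⟩
  have hj2 : (j : ℝ) < (m : ℝ) := by
    have : (j : ℝ) * π < (m : ℝ) * π := by rw [hj]; exact h2
    exact lt_of_mul_lt_mul_right this (le_of_lt hπ)
  have hj2' : j ≤ (m : ℤ) - 1 := by
    have : (j : ℤ) < (m : ℤ) := by exact_mod_cast hj2
    omega
  have hj3 : (j : ℝ) ≤ (m : ℝ) - 1 := by exact_mod_cast hj2'
  have : (j : ℝ) * π ≤ ((m : ℝ) - 1) * π := by
    apply mul_le_mul_of_nonneg_right hj3 (le_of_lt hπ)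
  rw [hj] at this
  nlinarith

private lemma cot_neg_aux (m : ℕ) (hm : 1 ≤ m) {t : ℝ}
    (h1 : (m : ℝ) * π - π / 2 < t) (h2 : t < (m : ℝ) * π) :
    Real.cos t / Real.sin t < 0 := by
  have hπ := Real.pi_pos
  have hs := sin_ne_zero_aux m hm h1 h2
  have hper : Real.sin (2 * t - (m : ℕ) * (2 * π)) = Real.sin (2 * t) :=
    (Real.sin_periodic.nat_mul m).sub_eq (2 * t)
  have h2t : Real.sin (2 * t) < 0 := by
    rw [← hper]
    apply Real.sin_neg_of_neg_of_neg_pi_lt <;> push_cast <;> nlinarith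
  have hnum : Real.cos t * Real.sin t < 0 := by
    have := Real.sin_two_mul t
    nlinarith
  have hkey : Real.cos t / Real.sin t = Real.cos t * Real.sin t / Real.sin t ^ 2 := by
    rw [sq, ← mul_div_mul_right (Real.cos t) (Real.sin t) hs]
  rw [hkey]
  exact div_neg_of_neg_of_pos hnum (by positivity)

private lemma hasDerivAt_cot_aux {t : ℝ} (hs : Real.sin t ≠ 0) :
    HasDerivAt (fun s => Real.cos s / Real.sin s) (-(1 / Real.sin t ^ 2)) t := by
  have h := (Real.hasDerivAt_cos t).div (Real.hasDerivAt_sin t) hs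
  convert h using 1
  have hsq := Real.sin_sq_add_cos_sq t
  any_goals rfl
  field_simp
  nlinarith [Real.sin_sq_add_cos_sq t]

/-- `h(t) = -t * cot t` is strictly increasing on `(mπ - π/2, mπ)`. -/
private lemma h_strictMono (m : ℕ) (hm : 1 ≤ m) :
    StrictMonoOn (fun s => -(s * (Real.cos s / Real.sin s)))
      (Ioo ((m : ℝ) * π - π / 2) ((m : ℝ) * π)) := by
  have hπ := Real.pi_pos
  apply strictMonoOn_of_deriv_pos (convex_Ioo _ _)
  · apply ContinuousOn.neg
    apply continuousOn_id.mul
    exact ContinuousOn.div Real.continuous_cos.continuousOn Real.continuous_sin.continuousOn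
      (fun t ht => sin_ne_zero_aux m hm ht.1 ht.2)
  · rw [interior_Ioo]
    intro t ht
    have hs := sin_ne_zero_aux m hm ht.1 ht.2
    have hd := ((hasDerivAt_id' (x := t)).mul (hasDerivAt_cot_aux hs)).neg
    rw [show deriv (fun s => -(s * (Real.cos s / Real.sin s))) t = _ from hd.deriv]
    have hcot := cot_neg_aux m hm ht.1 ht.2
    have ht0 : 0 < t := by
      have : (1 : ℝ) ≤ (m : ℝ) := by exact_mod_cast hm
      nlinarith [ht.1]
    have hsin2 : 0 < Real.sin t ^ 2 := by positivity
    have h1 : 0 < t * (1 / Real.sin t ^ 2) := by positivity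
    nlinarith

/-- Root analysis of the equation `λ − c√λ cot(q√λ/2) = μ` on `J_n` for even `n`:
`g` is continuous and strictly increasing on `J_n`, tends to the left endpoint value at the
left endpoint and to `+∞` at the right endpoint; hence for every `μ` above the left endpoint
there is a unique root in `J_n`. (Step 3 of the proof of Theorem 1.1, even case.) -/
theorem cot_equation_roots_even (q c : ℝ) (hq : 0 < q) (hc : 0 < c) (n : ℕ) (hn : 2 ≤ n)
    (heven : Even n) :
    let L : ℝ := (Real.pi * ((n : ℝ) - 1)) ^ 2 / q ^ 2
    let R : ℝ := (Real.pi * (n : ℝ)) ^ 2 / q ^ 2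
    let g : ℝ → ℝ := fun x => x - c * Real.sqrt x * Real.cot (q * Real.sqrt x / 2)
    ContinuousOn g (Ioo L R) ∧ StrictMonoOn g (Ioo L R) ∧
      Tendsto g (𝓝[Ioo L R] L) (𝓝 L) ∧
      Tendsto g (𝓝[Ioo L R] R) atTop ∧
      ∀ μ : ℝ, L < μ → ∃! x, x ∈ Ioo L R ∧ g x = μ := by
  intro L R g
  obtain ⟨m, hm⟩ := heven
  have hm1 : 1 ≤ m := by omega
  have hπ := Real.pi_pos
  set a : ℝ := (m : ℝ) * π - π / 2 with ha
  set b : ℝ := (m : ℝ) * π with hb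
  have hgdef : g = fun x => x - c * Real.sqrt x *
      (Real.cos (q * Real.sqrt x / 2) / Real.sin (q * Real.sqrt x / 2)) := by
    funext x
    show x - c * Real.sqrt x * Real.cot (q * Real.sqrt x / 2) = _
    rw [Real.cot_eq_cos_div_sin]
  have hLdef : L = (π * ((n : ℝ) - 1)) ^ 2 / q ^ 2 := rfl
  have hRdef : R = (π * (n : ℝ)) ^ 2 / q ^ 2 := rfl
  have hn2 : (2 : ℝ) ≤ (n : ℝ) := by exact_mod_cast hn
  have hA : (0 : ℝ) < π * ((n : ℝ) - 1) := by nlinarith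
  have hB : (0 : ℝ) < π * (n : ℝ) := by nlinarith
  have hL0 : 0 < L := by rw [hLdef]; positivity
  have hsqrtL : Real.sqrt L = π * ((n : ℝ) - 1) / q := by
    rw [hLdef, ← div_pow, Real.sqrt_sq (by positivity)]
  have hsqrtR : Real.sqrt R = π * (n : ℝ) / q := by
    rw [hRdef, ← div_pow, Real.sqrt_sq (by positivity)]
  have hφL : q * Real.sqrt L / 2 = a := by
    subst hm; rw [hsqrtL, ha]; push_cast; field_simp; ring
  have hφR : q * Real.sqrt R / 2 = b := by
    subst hm; rw [hsqrtR, hb]; push_cast; field_simp; ring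
  have hLR : L < R := by
    rw [hLdef, hRdef]
    have h1 : (π * ((n : ℝ) - 1)) ^ 2 < (π * (n : ℝ)) ^ 2 := by nlinarith
    exact (div_lt_div_iff_of_pos_right (by positivity)).mpr h1
  have hmap : ∀ x ∈ Ioo L R, q * Real.sqrt x / 2 ∈ Ioo a b := by
    intro x hx
    have h1 : Real.sqrt L < Real.sqrt x := Real.sqrt_lt_sqrt hL0.le hx.1
    have h2 : Real.sqrt x < Real.sqrt R := Real.sqrt_lt_sqrt (hL0.trans hx.1).le hx.2
    constructor
    · rw [← hφL]; nlinarith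
    · rw [← hφR]; nlinarith
  have hsne : ∀ x ∈ Ioo L R, Real.sin (q * Real.sqrt x / 2) ≠ 0 := fun x hx =>
    sin_ne_zero_aux m hm1 (hmap x hx).1 (hmap x hx).2
  have hφcont : Continuous (fun x : ℝ => q * Real.sqrt x / 2) :=
    (continuous_const.mul Real.continuous_sqrt).div_const 2
  -- continuity
  have hcont : ContinuousOn g (Ioo L R) := by
    rw [hgdef]
    apply ContinuousOn.sub continuousOn_id
    apply ContinuousOn.mul (continuous_const.mul Real.continuous_sqrt).continuousOn
    exact ContinuousOn.div (Real.continuous_cos.comp hφcont).continuousOn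
      (Real.continuous_sin.comp hφcont).continuousOn hsne
  -- strict monotonicity
  have hmono : StrictMonoOn g (Ioo L R) := by
    have hh := h_strictMono m hm1
    intro x hx y hy hxy
    have hx0 : 0 < x := hL0.trans hx.1
    have hφlt : q * Real.sqrt x / 2 < q * Real.sqrt y / 2 := by
      have := Real.sqrt_lt_sqrt hx0.le hxy
      nlinarith
    have hhlt := hh (hmap x hx) (hmap y hy) hφlt
    simp only at hhlt
    have ex : ∀ u W : ℝ, (2 * c / q) * (-(q * u / 2 * W)) = -(c * u * W) := by
      intro u W; field_simp
    have hscaled := mul_lt_mul_of_pos_left hhlt (show (0:ℝ) < 2 * c / q by positivity)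
    rw [ex, ex] at hscaled
    rw [hgdef]
    simp only
    linarith
  -- values at the left endpoint
  have hcosa : Real.cos a = 0 := by
    rw [ha, Real.cos_sub, Real.cos_pi_div_two, Real.sin_pi_div_two, Real.sin_nat_mul_pi]
    ring
  have hsina : Real.sin a ≠ 0 := by
    rw [ha, Real.sin_sub, Real.cos_pi_div_two, Real.sin_pi_div_two, Real.sin_nat_mul_pi]
    have : Real.cos ((m : ℝ) * π) = (-1) ^ m := by
      simpa using Real.cos_nat_mul_pi_sub 0 m
    rw [this]
    rcases Nat.even_or_odd m with h | h <;> simp [h.neg_one_pow] <;> norm_num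
  have hgL : g L = L := by
    rw [hgdef]
    simp only [hφL, hcosa, zero_div, mul_zero, sub_zero]
  have hcontAt : ContinuousAt g L := by
    rw [hgdef]
    apply ContinuousAt.sub continuousAt_id
    apply ContinuousAt.mul (continuous_const.mul Real.continuous_sqrt).continuousAt
    apply ContinuousAt.div (Real.continuous_cos.comp hφcont).continuousAt
      (Real.continuous_sin.comp hφcont).continuousAt
    show Real.sin (q * Real.sqrt L / 2) ≠ 0
    rw [hφL]; exact hsina
  have ht1 : Tendsto g (𝓝[Ioo L R] L) (𝓝 L) := by
    have h := hcontAt.tendsto.mono_left (nhdsWithin_le_nhds (s := Ioo L R))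
    rwa [hgL] at h
  -- right endpoint: tendsto atTop
  have hsinb : Real.sin b = 0 := by rw [hb]; exact Real.sin_nat_mul_pi m
  have hcosb : Real.cos b ≠ 0 := by
    have : Real.cos b = (-1) ^ m := by simpa [hb] using Real.cos_nat_mul_pi_sub 0 m
    rw [this]
    rcases Nat.even_or_odd m with h | h <;> simp [h.neg_one_pow] <;> norm_num
  have hφtend : Tendsto (fun x => q * Real.sqrt x / 2) (𝓝[Ioo L R] R) (𝓝[Ioo a b] b) := by
    rw [tendsto_nhdsWithin_iff]
    constructor
    · have h1 : Tendsto (fun x => q * Real.sqrt x / 2) (𝓝 R) (𝓝 (q * Real.sqrt R / 2)) :=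
        hφcont.tendsto R
      rw [hφR] at h1
      exact h1.mono_left nhdsWithin_le_nhds
    · filter_upwards [self_mem_nhdsWithin] with x hx using hmap x hx
  have hcotb : Tendsto (fun t => -(Real.cos t / Real.sin t)) (𝓝[Ioo a b] b) atTop := by
    have hb1 : Tendsto (fun t => |Real.cos t| * |Real.sin t|⁻¹) (𝓝[Ioo a b] b) atTop := by
      apply Filter.Tendsto.pos_mul_atTop (abs_pos.mpr hcosb)
      · exact ((Real.continuous_cos.abs.tendsto b)).mono_left nhdsWithin_le_nhds
      · apply tendsto_inv_nhdsGT_zero.comp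
        rw [tendsto_nhdsWithin_iff]
        constructor
        · have h2 : Tendsto (fun t => |Real.sin t|) (𝓝 b) (𝓝 |Real.sin b|) :=
            Real.continuous_sin.abs.tendsto b
          rw [hsinb, abs_zero] at h2
          exact h2.mono_left nhdsWithin_le_nhds
        · filter_upwards [self_mem_nhdsWithin] with t ht
          exact abs_pos.mpr (sin_ne_zero_aux m hm1 ht.1 ht.2)
    apply hb1.congr'
    filter_upwards [self_mem_nhdsWithin] with t ht
    have hneg := cot_neg_aux m hm1 ht.1 ht.2
    rw [← abs_inv, ← abs_mul, ← div_eq_mul_inv, abs_of_neg hneg]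
  have ht2 : Tendsto g (𝓝[Ioo L R] R) atTop := by
    have hmulC : Tendsto (fun x => c * Real.sqrt x) (𝓝[Ioo L R] R) (𝓝 (c * Real.sqrt R)) :=
      ((continuous_const.mul Real.continuous_sqrt).tendsto R).mono_left nhdsWithin_le_nhds
    have hpos : 0 < c * Real.sqrt R := by rw [hsqrtR]; positivity
    have hprod := Filter.Tendsto.pos_mul_atTop hpos hmulC (hcotb.comp hφtend)
    have hev : ∀ᶠ x in 𝓝[Ioo L R] R, L ≤ (fun x : ℝ => x) x := by
      filter_upwards [self_mem_nhdsWithin] with x hx using hx.1.le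
    have hsum := tendsto_atTop_add_left_of_le' (𝓝[Ioo L R] R) L hev hprod
    apply hsum.congr
    intro x
    rw [hgdef]
    simp only [Function.comp]
    ring
  refine ⟨hcont, hmono, ht1, ht2, ?_⟩
  -- existence and uniqueness of roots
  intro μ hμ
  have hne : (𝓝[Ioo L R] L).NeBot := by
    apply mem_closure_iff_nhdsWithin_neBot.mp
    rw [closure_Ioo hLR.ne]
    exact left_mem_Icc.mpr hLR.le
  have hne2 : (𝓝[Ioo L R] R).NeBot := by
    apply mem_closure_iff_nhdsWithin_neBot.mp
    rw [closure_Ioo hLR.ne]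
    exact right_mem_Icc.mpr hLR.le
  obtain ⟨x0, hx0lt, hx0m⟩ := ((ht1.eventually_lt_const hμ).and eventually_mem_nhdsWithin).exists
  obtain ⟨x1, hx1gt, hx1m⟩ := ((ht2.eventually_gt_atTop μ).and eventually_mem_nhdsWithin).exists
  have hx01 : x0 < x1 := by
    by_contra hle
    push_neg at hle
    rcases hle.lt_or_eq with h | h
    · exact absurd (hmono hx1m hx0m h) (by linarith)
    · rw [h] at hx1gt; linarith
  have hsub : Icc x0 x1 ⊆ Ioo L R := fun z hz =>
    ⟨lt_of_lt_of_le hx0m.1 hz.1, lt_of_le_of_lt hz.2 hx1m.2⟩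
  obtain ⟨x, hxIcc, hgx⟩ :=
    intermediate_value_Icc hx01.le (hcont.mono hsub) ⟨hx0lt.le, hx1gt.le⟩
  refine ⟨x, ⟨hsub hxIcc, hgx⟩, ?_⟩
  rintro y ⟨hy, hgy⟩
  exact hmono.injOn hy (hsub hxIcc) (by rw [hgy, hgx])
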